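/- Define Q^u_d(y) = Σ_{k=0}^{d} C(d,k) · ∏_{i=0}^{k-1}(i+1-r)(i+r) · ∏_{i=k+1}^{d}(y+d+r-i)(y+u+r+i). Then for all natural numbers u ≥ 1 and d ≥ 1, one has the dual recurrence (u+d)(y+d+r) · Q^u_d(y) = u(y+r) · Q^{u-1}_d(y+1) + d(y+u+d+r)(y+d-1+2r)(y+d) · Q^u_{d-1}(y), as an identity of polynomials in y and r. -/

import Mathlib

open Finset

/-- The two-variable polynomial ring `ℚ[y, r]`: variable `0` is `y` and variable `1` is `r`. -/
noncomputable abbrev R2 : Type := MvPolynomial (Fin 2) ℚ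

noncomputable def r : R2 := MvPolynomial.X 1

/-- `Q u d y = Σ_{k=0}^{d} C(d,k) ∏_{i=0}^{k-1}(i+1-r)(i+r) ∏_{i=k+1}^{d}(y+d+r-i)(y+u+r+i)`,
as a function of the element `y` (so that substitutions like `y ↦ y+1` are meaningful). -/
noncomputable def Q (u d : ℕ) (y : R2) : R2 :=
  ∑ k ∈ Finset.range (d + 1),
    (d.choose k : R2) * (∏ i ∈ Finset.range k, (((i : R2) + 1 - r) * ((i : R2) + r))) *
      ∏ i ∈ Finset.Icc (k + 1) d,
        ((y + (d : R2) + r - (i : R2)) * (y + (u : R2) + r + (i : R2)))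

/-- `φ d y = ∏_{i=1}^{d} (y+i)(y+i-1+2r)`. -/
noncomputable def phi (d : ℕ) (y : R2) : R2 :=
  ∏ i ∈ Finset.Icc 1 d, ((y + (i : R2)) * (y + (i : R2) - 1 + 2 * r))

noncomputable def Y : R2 := MvPolynomial.X 0

noncomputable def AA (k : ℕ) : R2 :=
  ∏ i ∈ Finset.range k, (((i : R2) + 1 - r) * ((i : R2) + r))

noncomputable def Pw (m : ℕ) : R2 := ∏ j ∈ Finset.range m, (Y + r + (j : R2))

noncomputable def Hp (u d l : ℕ) : R2 :=
  ∏ j ∈ Finset.Icc l d, (Y + (u : R2) + r + (j : R2))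

lemma reindex (z : R2) (d k : ℕ) (hk : k ≤ d) :
    ∏ i ∈ Finset.Icc (k+1) d, (z + (d : R2) + r - (i : R2)) =
      ∏ j ∈ Finset.range (d - k), (z + r + (j : R2)) := by
  rw [← Finset.Ico_add_one_right_eq_Icc, Finset.prod_Ico_eq_prod_range]
  rw [← Finset.prod_range_reflect]
  apply Finset.prod_congr (by congr 1; omega)
  intro j hj
  simp only [Finset.mem_range] at hj
  have h1 : k + 1 + (d + 1 - (k + 1) - 1 - j) = d - j := by omega
  rw [h1]
  have h2 : ((d - j : ℕ) : R2) = (d : R2) - (j : R2) := by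
    have : j ≤ d := by omega
    push_cast [this]; ring
  rw [h2]; ring

lemma Hp_bot (u d k : ℕ) (hk : k ≤ d) :
    Hp u d k = (Y + (u : R2) + r + (k : R2)) * Hp u d (k+1) := by
  unfold Hp
  rw [← Finset.Ico_add_one_right_eq_Icc, ← Finset.Ico_add_one_right_eq_Icc,
    Finset.prod_eq_prod_Ico_succ_bot (by omega : k < d + 1)]

lemma Hp_top (u e k : ℕ) (hk : k ≤ e) :
    Hp u (e+1) (k+1) =
      (∏ j ∈ Finset.Icc (k+1) e, (Y + (u : R2) + r + (j : R2))) *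
        (Y + (u : R2) + r + ((e : R2) + 1)) := by
  unfold Hp
  rw [Finset.prod_Icc_succ_top (by omega : k + 1 ≤ e + 1)]
  push_cast
  ring

lemma L1 (u d : ℕ) :
    Q u d Y = ∑ k ∈ Finset.range (d + 1),
      (d.choose k : R2) * AA k * Pw (d - k) * Hp u d (k + 1) := by
  unfold Q AA
  refine Finset.sum_congr rfl fun k hk => ?_
  have hkd : k ≤ d := by simpa using Nat.lt_succ_iff.mp (Finset.mem_range.mp hk)
  have hsplit : ∏ i ∈ Finset.Icc (k+1) d,
      ((Y + (d : R2) + r - (i : R2)) * (Y + (u : R2) + r + (i : R2))) =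
      (∏ i ∈ Finset.Icc (k+1) d, (Y + (d : R2) + r - (i : R2))) *
        ∏ i ∈ Finset.Icc (k+1) d, (Y + (u : R2) + r + (i : R2)) :=
    Finset.prod_mul_distrib
  rw [hsplit, reindex Y d k hkd]
  unfold Pw Hp
  ring

lemma shift (m : ℕ) :
    (Y + r) * ∏ j ∈ Finset.range m, (Y + 1 + r + (j : R2)) =
      Pw m * (Y + r + (m : R2)) := by
  have h1 : ∏ j ∈ Finset.range m, (Y + 1 + r + (j : R2)) =
      ∏ j ∈ Finset.range m, (Y + r + ((j + 1 : ℕ) : R2)) := by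
    refine Finset.prod_congr rfl fun j _ => by push_cast; ring
  rw [h1]
  have h2 := Finset.prod_range_succ' (fun j : ℕ => Y + r + (j : R2)) m
  have h3 := Finset.prod_range_succ (fun j : ℕ => Y + r + (j : R2)) m
  unfold Pw
  rw [← h3, h2]
  push_cast
  ring

lemma L2 (u d : ℕ) (hu : 1 ≤ u) :
    (Y + r) * Q (u - 1) d (Y + 1) = ∑ k ∈ Finset.range (d + 1),
      (d.choose k : R2) * AA k * (Pw (d - k) * (Y + r + ((d - k : ℕ) : R2))) *
        Hp u d (k + 1) := by
  unfold Q AA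
  rw [Finset.mul_sum]
  refine Finset.sum_congr rfl fun k hk => ?_
  have hkd : k ≤ d := by simpa using Nat.lt_succ_iff.mp (Finset.mem_range.mp hk)
  have hsplit : ∏ i ∈ Finset.Icc (k+1) d,
      ((Y + 1 + (d : R2) + r - (i : R2)) * (Y + 1 + ((u - 1 : ℕ) : R2) + r + (i : R2))) =
      (∏ i ∈ Finset.Icc (k+1) d, (Y + 1 + (d : R2) + r - (i : R2))) *
        ∏ i ∈ Finset.Icc (k+1) d, (Y + 1 + ((u - 1 : ℕ) : R2) + r + (i : R2)) :=
    Finset.prod_mul_distrib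
  rw [hsplit, reindex (Y + 1) d k hkd]
  have h1 : ∏ i ∈ Finset.Icc (k+1) d, (Y + 1 + ((u - 1 : ℕ) : R2) + r + (i : R2)) =
      Hp u d (k + 1) := by
    unfold Hp
    refine Finset.prod_congr rfl fun i _ => ?_
    push_cast [hu]
    ring
  rw [h1, ← shift (d - k)]
  ring

lemma L3 (u d : ℕ) (hd : 1 ≤ d) :
    (Y + (u : R2) + (d : R2) + r) * Q u (d - 1) Y = ∑ k ∈ Finset.range d,
      ((d - 1).choose k : R2) * AA k * Pw (d - 1 - k) * Hp u d (k + 1) := by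
  unfold Q AA
  rw [Nat.sub_add_cancel hd, Finset.mul_sum]
  refine Finset.sum_congr rfl fun k hk => ?_
  have hkd : k ≤ d - 1 := by have := Finset.mem_range.mp hk; omega
  have hsplit : ∏ i ∈ Finset.Icc (k+1) (d-1),
      ((Y + ((d - 1 : ℕ) : R2) + r - (i : R2)) * (Y + (u : R2) + r + (i : R2))) =
      (∏ i ∈ Finset.Icc (k+1) (d-1), (Y + ((d - 1 : ℕ) : R2) + r - (i : R2))) *
        ∏ i ∈ Finset.Icc (k+1) (d-1), (Y + (u : R2) + r + (i : R2)) :=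
    Finset.prod_mul_distrib
  rw [hsplit, reindex Y (d-1) k hkd]
  have htop := Hp_top u (d-1) k hkd
  rw [Nat.sub_add_cancel hd] at htop
  rw [htop]
  have hcast : (((d - 1 : ℕ)) : R2) + 1 = (d : R2) := by push_cast [hd]; ring
  rw [hcast]
  unfold Pw
  ring

noncomputable def T (u d k : ℕ) : R2 :=
  -(k : R2) * (d.choose k : R2) * AA k * Pw (d - k) * Hp u d k

lemma Pw_succ (m : ℕ) : Pw (m + 1) = Pw m * (Y + r + (m : R2)) :=
  Finset.prod_range_succ (fun j : ℕ => Y + r + (j : R2)) m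

lemma AA_succ (k : ℕ) :
    AA (k + 1) = AA k * (((k : R2) + 1 - r) * ((k : R2) + r)) :=
  Finset.prod_range_succ (fun i : ℕ => ((i : R2) + 1 - r) * ((i : R2) + r)) k

lemma key (u d k : ℕ) (hd : 1 ≤ d) (hk : k ≤ d) :
    ((u : R2) + (d : R2)) * (Y + (d : R2) + r) *
        ((d.choose k : R2) * AA k * Pw (d - k) * Hp u d (k + 1)) -
      ((u : R2) *
          ((d.choose k : R2) * AA k * (Pw (d - k) * (Y + r + ((d - k : ℕ) : R2))) *
            Hp u d (k + 1)) +
        (d : R2) * (Y + (d : R2) - 1 + 2 * r) * (Y + (d : R2)) *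
          (((d - 1).choose k : R2) * AA k * Pw (d - 1 - k) * Hp u d (k + 1))) =
      T u d (k + 1) - T u d k := by
  rcases eq_or_lt_of_le hk with hkd | hkd
  · -- k = d
    subst hkd
    unfold T
    rw [Nat.choose_succ_self, Nat.choose_self,
      Nat.choose_eq_zero_of_lt (by omega : k - 1 < k), Nat.sub_self]
    have h1 : Hp u k (k + 1) = 1 := by
      unfold Hp
      rw [Finset.Icc_eq_empty (by omega : ¬ (k + 1 ≤ k)), Finset.prod_empty]
    have h2 : Hp u k k = Y + (u : R2) + r + (k : R2) := by
      unfold Hp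
      rw [Finset.Icc_self, Finset.prod_singleton]
    have h3 : Pw 0 = 1 := Finset.prod_range_zero (fun j : ℕ => Y + r + (j : R2))
    rw [h1, h2, h3]
    push_cast
    ring
  · -- k < d
    obtain ⟨m, rfl⟩ : ∃ m, d = k + 1 + m := ⟨d - k - 1, by omega⟩
    have e1 : k + 1 + m - k = m + 1 := by omega
    have e2 : k + 1 + m - 1 - k = m := by omega
    have e3 : k + 1 + m - (k + 1) = m := by omega
    have e4 : k + 1 + m - 1 = k + m := by omega
    rw [e1, e2, e4]
    unfold T
    rw [e1, e3, Pw_succ, AA_succ, Hp_bot u (k+1+m) k (by omega)]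
    have h1 : ((k + 1 : ℕ) : R2) * (((k + 1 + m).choose (k + 1) : ℕ) : R2) =
        ((m + 1 : ℕ) : R2) * (((k + 1 + m).choose k : ℕ) : R2) := by
      have := Nat.choose_succ_right_eq (k + 1 + m) k
      rw [show k + 1 + m - k = m + 1 from by omega] at this
      exact_mod_cast by rw [mul_comm ((k:ℕ)+1), this, mul_comm]
    have h3 : ((k + 1 + m : ℕ) : R2) * (((k + m).choose k : ℕ) : R2) =
        ((m + 1 : ℕ) : R2) * (((k + 1 + m).choose k : ℕ) : R2) := by
      have a := Nat.add_one_mul_choose_eq (k + m) k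
      have b := Nat.choose_succ_right_eq (k + m + 1) k
      rw [show k + m + 1 - k = m + 1 from by omega] at b
      have : (k + 1 + m) * (k + m).choose k = (m + 1) * ((k + 1 + m).choose k) := by
        rw [show k + 1 + m = Nat.succ (k + m) from by omega] at *
        rw [a, b]
        ring
      exact_mod_cast this
    push_cast at h1 h3 ⊢
    linear_combination
      (AA k * (((k : R2) + 1 - r) * ((k : R2) + r)) * Pw m * Hp u (k+1+m) (k+1)) * h1
      + (-(Y + ((k:R2)+1+(m:R2)) - 1 + 2*r) * (Y + ((k:R2)+1+(m:R2))) * AA k * Pw m *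
          Hp u (k+1+m) (k+1)) * h3

theorem main (u d : ℕ) (hu : 1 ≤ u) (hd : 1 ≤ d) :
    ((u : R2) + (d : R2)) * (Y + (d : R2) + r) * Q u d Y =
      (u : R2) * (Y + r) * Q (u - 1) d (Y + 1) +
        (d : R2) * (Y + (u : R2) + (d : R2) + r) *
          (Y + (d : R2) - 1 + 2 * r) * (Y + (d : R2)) *
            Q u (d - 1) Y := by
  have e2 : (u : R2) * (Y + r) * Q (u - 1) d (Y + 1) =
      (u : R2) * ∑ k ∈ Finset.range (d + 1),
        (d.choose k : R2) * AA k * (Pw (d - k) * (Y + r + ((d - k : ℕ) : R2))) *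
          Hp u d (k + 1) := by
    rw [mul_assoc, L2 u d hu]
  have e3 : (d : R2) * (Y + (u : R2) + (d : R2) + r) *
        (Y + (d : R2) - 1 + 2 * r) * (Y + (d : R2)) * Q u (d - 1) Y =
      (d : R2) * (Y + (d : R2) - 1 + 2 * r) * (Y + (d : R2)) *
        ∑ k ∈ Finset.range (d + 1),
          ((d - 1).choose k : R2) * AA k * Pw (d - 1 - k) * Hp u d (k + 1) := by
    have hext : (∑ k ∈ Finset.range (d + 1),
          ((d - 1).choose k : R2) * AA k * Pw (d - 1 - k) * Hp u d (k + 1)) =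
        ∑ k ∈ Finset.range d,
          ((d - 1).choose k : R2) * AA k * Pw (d - 1 - k) * Hp u d (k + 1) := by
      rw [Finset.sum_range_succ, Nat.choose_eq_zero_of_lt (by omega : d - 1 < d)]
      simp
    rw [hext, ← L3 u d hd]
    ring
  rw [L1, e2, e3, Finset.mul_sum, Finset.mul_sum, Finset.mul_sum,
    ← Finset.sum_add_distrib, ← sub_eq_zero, ← Finset.sum_sub_distrib]
  have hpt : ∀ k ∈ Finset.range (d + 1),
      ((u : R2) + (d : R2)) * (Y + (d : R2) + r) *
          ((d.choose k : R2) * AA k * Pw (d - k) * Hp u d (k + 1)) -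
        ((u : R2) *
            ((d.choose k : R2) * AA k * (Pw (d - k) * (Y + r + ((d - k : ℕ) : R2))) *
              Hp u d (k + 1)) +
          (d : R2) * (Y + (d : R2) - 1 + 2 * r) * (Y + (d : R2)) *
            (((d - 1).choose k : R2) * AA k * Pw (d - 1 - k) * Hp u d (k + 1))) =
      T u d (k + 1) - T u d k := fun k hk =>
    key u d k hd (by have := Finset.mem_range.mp hk; omega)
  rw [Finset.sum_congr rfl hpt, Finset.sum_range_sub]
  simp [T, Nat.choose_succ_self]

theorem stmt7 (u d : ℕ) (hu : 1 ≤ u) (hd : 1 ≤ d) :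
    ((u : R2) + (d : R2)) * (MvPolynomial.X 0 + (d : R2) + r) * Q u d (MvPolynomial.X 0) =
      (u : R2) * (MvPolynomial.X 0 + r) * Q (u - 1) d (MvPolynomial.X 0 + 1) +
        (d : R2) * (MvPolynomial.X 0 + (u : R2) + (d : R2) + r) *
          (MvPolynomial.X 0 + (d : R2) - 1 + 2 * r) * (MvPolynomial.X 0 + (d : R2)) *
            Q u (d - 1) (MvPolynomial.X 0) := by
  exact main u d hu hd
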